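/- arXiv:1504.07728 — 2 statements merged into one kernel-verified Lean document; each statement's English description precedes it below -/
import Mathlib

section
/- The utility function U(p) = -p^w - d·exp(-v a (c p)^b) with a < 0, b < 0, c > 0, d > 0, v > 0 and w ≥ 1 satisfies U''(p) < 0 for all p > 0, i.e., U is strictly concave on (0, ∞). -/
open Real

-- first derivative
lemma hasDeriv1 (a b c d v w : ℝ) (hc : 0 < c) {x : ℝ} (hx : 0 < x) :
    HasDerivAt (fun p : ℝ => -p ^ w - d * Real.exp (-v * a * (c * p) ^ b))
      (-(w * x ^ (w-1)) - d * (Real.exp (-v * a * (c * x) ^ b) *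
        (-v * a * (b * (c * x) ^ (b-1) * c)))) x := by
  have hcx : 0 < c * x := mul_pos hc hx
  have h1 : HasDerivAt (fun y : ℝ => c * y) c x := by
    simpa using (hasDerivAt_id x).const_mul c
  have h2 : HasDerivAt (fun y : ℝ => (c * y) ^ b) (b * (c * x) ^ (b-1) * c) x := by
    have := h1.rpow_const (p := b) (Or.inl hcx.ne')
    rwa [show c * b * (c * x) ^ (b-1) = b * (c * x) ^ (b-1) * c by ring] at this
  have h3 := h2.const_mul (-v * a)
  have h4 := h3.exp
  have h5 := h4.const_mul d
  have h6 : HasDerivAt (fun y : ℝ => y ^ w) (w * x ^ (w-1)) x :=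
    Real.hasDerivAt_rpow_const (Or.inl hx.ne')
  exact h6.neg.sub h5

lemma hasDeriv2 (a b c d v w : ℝ) (hc : 0 < c) {x : ℝ} (hx : 0 < x) :
    HasDerivAt (fun y : ℝ => -(w * y ^ (w-1)) - d * (Real.exp (-v * a * (c * y) ^ b) *
        (-v * a * (b * (c * y) ^ (b-1) * c))))
      (-(w * ((w-1) * x ^ (w-1-1))) - d *
        ((Real.exp (-v * a * (c * x) ^ b) * (-v * a * (b * (c * x) ^ (b-1) * c))) *
          (-v * a * (b * (c * x) ^ (b-1) * c)) +
         Real.exp (-v * a * (c * x) ^ b) *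
          (-v * a * (b * ((b-1) * (c * x) ^ (b-1-1) * c) * c)))) x := by
  have hcx : 0 < c * x := mul_pos hc hx
  have h1 : HasDerivAt (fun y : ℝ => c * y) c x := by
    simpa using (hasDerivAt_id x).const_mul c
  have h2 : HasDerivAt (fun y : ℝ => (c * y) ^ b) (b * (c * x) ^ (b-1) * c) x := by
    have := h1.rpow_const (p := b) (Or.inl hcx.ne')
    rwa [show c * b * (c * x) ^ (b-1) = b * (c * x) ^ (b-1) * c by ring] at this
  have h3 := h2.const_mul (-v * a)
  have h4 := h3.exp
  have hr : HasDerivAt (fun y : ℝ => (c * y) ^ (b-1)) ((b-1) * (c * x) ^ (b-1-1) * c) x := by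
    have := h1.rpow_const (p := b-1) (Or.inl hcx.ne')
    rwa [show c * (b-1) * (c * x) ^ (b-1-1) = (b-1) * (c * x) ^ (b-1-1) * c by ring] at this
  have hh := ((hr.const_mul b).mul_const c).const_mul (-v * a)
  have hB := (h4.mul hh).const_mul d
  have h6 : HasDerivAt (fun y : ℝ => y ^ (w-1)) ((w-1) * x ^ (w-1-1)) x :=
    Real.hasDerivAt_rpow_const (Or.inl hx.ne')
  exact ((h6.const_mul w).neg).sub hB

lemma second_deriv_neg (a b c d v w : ℝ) (ha : a < 0) (hb : b < 0) (hc : 0 < c)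
    (hd : 0 < d) (hv : 0 < v) (hw : 1 ≤ w) {p : ℝ} (hp : 0 < p) :
    deriv (deriv (fun p : ℝ => -p ^ w - d * Real.exp (-v * a * (c * p) ^ b))) p < 0 := by
  have hmem : Set.Ioi (0:ℝ) ∈ nhds p := isOpen_Ioi.mem_nhds hp
  have heq : deriv (fun p : ℝ => -p ^ w - d * Real.exp (-v * a * (c * p) ^ b)) =ᶠ[nhds p]
      (fun y : ℝ => -(w * y ^ (w-1)) - d * (Real.exp (-v * a * (c * y) ^ b) *
        (-v * a * (b * (c * y) ^ (b-1) * c)))) := by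
    filter_upwards [hmem] with x hx
    exact (hasDeriv1 a b c d v w hc hx).deriv
  rw [heq.deriv_eq, (hasDeriv2 a b c d v w hc hp).deriv]
  set Ep := Real.exp (-v * a * (c * p) ^ b) with hEp
  set H := -v * a * (b * (c * p) ^ (b-1) * c) with hH
  have hcx : 0 < c * p := mul_pos hc hp
  have hX : 0 < (c * p) ^ (b-1-1) := Real.rpow_pos_of_pos hcx _
  have hDh : 0 < -v * a * (b * ((b-1) * (c * p) ^ (b-1-1) * c) * c) := by
    have : -v * a * (b * ((b-1) * (c * p) ^ (b-1-1) * c) * c)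
        = ((v * -a) * (-b * -(b-1)) * (c * c)) * (c * p) ^ (b-1-1) := by ring
    rw [this]
    apply mul_pos _ hX
    apply mul_pos (mul_pos (mul_pos hv (by linarith)) (mul_pos (by linarith) (by linarith)))
      (mul_pos hc hc)
  have hEpos : 0 < Ep := Real.exp_pos _
  have hPw : 0 < p ^ (w-1-1) := Real.rpow_pos_of_pos hp _
  have hA : 0 ≤ w * ((w-1) * p ^ (w-1-1)) := by
    apply mul_nonneg (by linarith)
    exact mul_nonneg (by linarith) hPw.le
  nlinarith [mul_pos hd (mul_pos hEpos hDh), mul_nonneg hd.le (mul_nonneg hEpos.le (mul_self_nonneg H))]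

theorem utility_strictly_concave (a b c d v w : ℝ) (ha : a < 0) (hb : b < 0) (hc : 0 < c)
    (hd : 0 < d) (hv : 0 < v) (hw : 1 ≤ w) :
    (∀ p : ℝ, 0 < p →
      deriv (deriv (fun p : ℝ => -p ^ w - d * Real.exp (-v * a * (c * p) ^ b))) p < 0) ∧
    StrictConcaveOn ℝ (Set.Ioi 0)
      (fun p : ℝ => -p ^ w - d * Real.exp (-v * a * (c * p) ^ b)) := by
  refine ⟨fun p hp => second_deriv_neg a b c d v w ha hb hc hd hv hw hp, ?_⟩
  apply strictConcaveOn_of_deriv2_neg (convex_Ioi 0)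
  · intro x hx
    exact (hasDeriv1 a b c d v w hc hx).differentiableAt.continuousAt.continuousWithinAt
  · intro x hx
    rw [interior_Ioi] at hx
    simpa [Function.iterate_succ, Function.comp] using
      second_deriv_neg a b c d v w ha hb hc hd hv hw hx
end

section
/- Under the assumptions a < 0, b < 0, c > 0, d > 0, v > 0, w ≥ 1, the utility U(p) = -p^w - d exp(-v a (c p)^b) attains a maximum at a unique interior point p* ∈ (0, ∞) characterized by U'(p*) = 0. -/
open Real Set Filter Topology

theorem utility_unique_interior_maximizer (a b c d v w : ℝ) (ha : a < 0) (hb : b < 0)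
    (hc : 0 < c) (hd : 0 < d) (hv : 0 < v) (hw : 1 ≤ w) :
    ∃! p : ℝ, 0 < p ∧
      IsMaxOn (fun q : ℝ => -q ^ w - d * Real.exp (-v * a * (c * q) ^ b)) (Set.Ioi 0) p ∧
      deriv (fun q : ℝ => -q ^ w - d * Real.exp (-v * a * (c * q) ^ b)) p = 0 := by
  set U : ℝ → ℝ := fun q => -q ^ w - d * Real.exp (-v * a * (c * q) ^ b) with hUdef
  set F : ℝ → ℝ := fun q => -v * a * (c * q) ^ b with hFdef
  set F1 : ℝ → ℝ := fun q => (-v * a * b * c) * (c * q) ^ (b - 1) with hF1def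
  set F2 : ℝ → ℝ := fun q => (-v * a * b * c) * ((b - 1) * (c * q) ^ (b - 1 - 1) * c)
    with hF2def
  set U1 : ℝ → ℝ := fun q => -(w * q ^ (w - 1)) - d * (Real.exp (F q) * F1 q) with hU1def
  set U2 : ℝ → ℝ := fun q =>
    -(w * ((w - 1) * q ^ (w - 1 - 1))) -
      d * (Real.exp (F q) * F1 q * F1 q + Real.exp (F q) * F2 q) with hU2def
  have hva : 0 < -v * a := by nlinarith
  have hcq : ∀ q : ℝ, 0 < q → 0 < c * q := fun q hq => mul_pos hc hq
  -- derivative of the inner linear map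
  have hlin : ∀ q : ℝ, HasDerivAt (fun q : ℝ => c * q) c q := by
    intro q
    simpa using (hasDerivAt_id q).const_mul c
  -- derivative of F
  have hFat : ∀ q : ℝ, 0 < q → HasDerivAt F (F1 q) q := by
    intro q hq
    have h3 : HasDerivAt (fun q : ℝ => (c * q) ^ b) (b * (c * q) ^ (b - 1) * c) q :=
      (Real.hasDerivAt_rpow_const (Or.inl (hcq q hq).ne')).comp q (hlin q)
    have := h3.const_mul (-v * a)
    refine this.congr_deriv ?_
    simp only [hF1def]; ring
  have hF1at : ∀ q : ℝ, 0 < q → HasDerivAt F1 (F2 q) q := by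
    intro q hq
    have h3 : HasDerivAt (fun q : ℝ => (c * q) ^ (b - 1))
        ((b - 1) * (c * q) ^ (b - 1 - 1) * c) q :=
      (Real.hasDerivAt_rpow_const (Or.inl (hcq q hq).ne')).comp q (hlin q)
    exact h3.const_mul _
  -- derivative of U
  have hUat : ∀ q : ℝ, 0 < q → HasDerivAt U (U1 q) q := by
    intro q hq
    have h1 : HasDerivAt (fun q : ℝ => q ^ w) (w * q ^ (w - 1)) q :=
      Real.hasDerivAt_rpow_const (Or.inr hw)
    have h2 : HasDerivAt (fun q : ℝ => Real.exp (F q)) (Real.exp (F q) * F1 q) q :=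
      (Real.hasDerivAt_exp (F q)).comp q (hFat q hq)
    exact h1.neg.sub (h2.const_mul d |>.congr_deriv (by ring))
  -- derivative of U1
  have hU1at : ∀ q : ℝ, 0 < q → HasDerivAt U1 (U2 q) q := by
    intro q hq
    have h1 : HasDerivAt (fun q : ℝ => q ^ (w - 1)) ((w - 1) * q ^ (w - 1 - 1)) q :=
      Real.hasDerivAt_rpow_const (Or.inl hq.ne')
    have h2 : HasDerivAt (fun q : ℝ => Real.exp (F q)) (Real.exp (F q) * F1 q) q :=
      (Real.hasDerivAt_exp (F q)).comp q (hFat q hq)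
    have h3 : HasDerivAt (fun q : ℝ => Real.exp (F q) * F1 q)
        (Real.exp (F q) * F1 q * F1 q + Real.exp (F q) * F2 q) q :=
      h2.mul (hF1at q hq)
    exact ((h1.const_mul w).neg).sub (h3.const_mul d |>.congr_deriv (by ring))
  -- signs
  have hF1neg : ∀ q : ℝ, 0 < q → F1 q < 0 := by
    intro q hq
    have h1 : -v * a * b * c < 0 :=
      mul_neg_of_neg_of_pos (mul_neg_of_pos_of_neg hva hb) hc
    have h2 : (0:ℝ) < (c * q) ^ (b - 1) := Real.rpow_pos_of_pos (hcq q hq) _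
    exact mul_neg_of_neg_of_pos h1 h2
  have hF2pos : ∀ q : ℝ, 0 < q → 0 < F2 q := by
    intro q hq
    have h1 : -v * a * b * c < 0 :=
      mul_neg_of_neg_of_pos (mul_neg_of_pos_of_neg hva hb) hc
    have h2 : (0:ℝ) < (c * q) ^ (b - 1 - 1) := Real.rpow_pos_of_pos (hcq q hq) _
    have h3 : (b - 1) * (c * q) ^ (b - 1 - 1) * c < 0 :=
      mul_neg_of_neg_of_pos (mul_neg_of_neg_of_pos (by linarith : b - 1 < 0) h2) hc
    exact mul_pos_of_neg_of_neg h1 h3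
  have hU2neg : ∀ q : ℝ, 0 < q → U2 q < 0 := by
    intro q hq
    have hE : (0:ℝ) < Real.exp (F q) := Real.exp_pos _
    have h1 : 0 ≤ w * ((w - 1) * q ^ (w - 1 - 1)) := by
      have : (0:ℝ) < q ^ (w - 1 - 1) := Real.rpow_pos_of_pos hq _
      have hw1 : 0 ≤ w - 1 := by linarith
      positivity
    have h2 : 0 < Real.exp (F q) * F1 q * F1 q + Real.exp (F q) * F2 q := by
      have hf1 := hF1neg q hq
      have hf2 := hF2pos q hq
      have hA : 0 < Real.exp (F q) * F1 q * F1 q :=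
        mul_pos_of_neg_of_neg (mul_neg_of_pos_of_neg hE hf1) hf1
      have hB : 0 < Real.exp (F q) * F2 q := mul_pos hE hf2
      linarith
    have : 0 < d * (Real.exp (F q) * F1 q * F1 q + Real.exp (F q) * F2 q) :=
      mul_pos hd h2
    simp only [hU2def]
    linarith
  -- continuity
  have hcont : ContinuousOn U (Ioi 0) := fun x hx =>
    (hUat x hx).continuousAt.continuousWithinAt
  -- strict concavity
  have hconc : StrictConcaveOn ℝ (Ioi (0:ℝ)) U := by
    apply strictConcaveOn_of_deriv2_neg (convex_Ioi 0) hcont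
    intro x hx
    rw [interior_Ioi] at hx
    have hde : deriv U =ᶠ[𝓝 x] U1 := by
      filter_upwards [Ioi_mem_nhds hx] with y hy using (hUat y hy).deriv
    have : deriv (deriv U) x = U2 x := by
      rw [Filter.EventuallyEq.deriv_eq hde, (hU1at x hx).deriv]
    have h2 : deriv^[2] U x = deriv (deriv U) x := by
      simp [Function.iterate_succ_apply']
    rw [h2, this]
    exact hU2neg x hx
  -- tendsto at 0⁺
  have h0 : Tendsto U (𝓝[>] (0:ℝ)) atBot := by
    have hFtop : Tendsto F (𝓝[>] (0:ℝ)) atTop := by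
      have h1 : Tendsto (fun q : ℝ => c * q) (𝓝[>] (0:ℝ)) (𝓝[>] (0:ℝ)) := by
        rw [tendsto_nhdsWithin_iff]
        constructor
        · have : Tendsto (fun q : ℝ => c * q) (𝓝 (0:ℝ)) (𝓝 (c * 0)) :=
            (continuous_const.mul continuous_id).tendsto 0
          simpa using this.mono_left nhdsWithin_le_nhds
        · filter_upwards [self_mem_nhdsWithin] with q hq
          exact hcq q hq
      have h2 : Tendsto (fun x : ℝ => x ^ b) (𝓝[>] (0:ℝ)) atTop := by
        have h3 : Tendsto (fun x : ℝ => (x⁻¹) ^ (-b)) (𝓝[>] (0:ℝ)) atTop :=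
          (tendsto_rpow_atTop (by linarith : 0 < -b)).comp tendsto_inv_nhdsGT_zero
        refine h3.congr' ?_
        filter_upwards [self_mem_nhdsWithin] with x hx
        rw [Real.inv_rpow (le_of_lt hx), Real.rpow_neg (le_of_lt hx), inv_inv]
      have h4 : Tendsto (fun q : ℝ => (c * q) ^ b) (𝓝[>] (0:ℝ)) atTop := h2.comp h1
      exact Tendsto.const_mul_atTop hva h4
    have hexp : Tendsto (fun q : ℝ => -(d * Real.exp (F q))) (𝓝[>] (0:ℝ)) atBot := by
      have := (Real.tendsto_exp_atTop.comp hFtop).const_mul_atTop hd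
      exact tendsto_neg_atTop_atBot.comp this
    refine tendsto_atBot_mono' _ ?_ hexp
    filter_upwards [self_mem_nhdsWithin] with q hq
    have : (0:ℝ) < q ^ w := Real.rpow_pos_of_pos hq _
    simp only [hUdef]
    simp only [hFdef]
    linarith
  -- tendsto at ⊤
  have hTop : Tendsto U atTop atBot := by
    have h1 : Tendsto (fun q : ℝ => -q ^ w) atTop atBot :=
      tendsto_neg_atTop_atBot.comp (tendsto_rpow_atTop (by linarith : (0:ℝ) < w))
    refine tendsto_atBot_mono' _ ?_ h1
    filter_upwards with q
    have : 0 < d * Real.exp (-v * a * (c * q) ^ b) := mul_pos hd (Real.exp_pos _)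
    simp only [hUdef]
    linarith
  -- pick barriers around 1
  have hU1lt : ∀ᶠ q in 𝓝[>] (0:ℝ), U q < U 1 := h0.eventually (eventually_lt_atBot (U 1))
  obtain ⟨ε, hε0, hεsub⟩ := mem_nhdsGT_iff_exists_Ioc_subset.1 hU1lt
  have hε0' : (0:ℝ) < ε := hε0
  obtain ⟨M, hM⟩ := (hTop.eventually (eventually_lt_atBot (U 1))).exists_forall_of_atTop
  set ε' : ℝ := min ε 1 with hε'def
  have hε'0 : 0 < ε' := lt_min hε0' one_pos
  have hε'1 : ε' ≤ 1 := min_le_right _ _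
  set M' : ℝ := max M 1 with hM'def
  have hM'1 : (1:ℝ) ≤ M' := le_max_right _ _
  -- max on compact set
  have hKsub : Icc ε' M' ⊆ Ioi (0:ℝ) := fun x hx => lt_of_lt_of_le hε'0 hx.1
  obtain ⟨p, hpK, hpmax⟩ := (isCompact_Icc (a := ε') (b := M')).exists_isMaxOn
    ⟨1, hε'1, hM'1⟩ (hcont.mono hKsub)
  have hp0 : 0 < p := hKsub hpK
  have h1K : (1:ℝ) ∈ Icc ε' M' := ⟨hε'1, hM'1⟩
  have hU1le : U 1 ≤ U p := hpmax h1K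
  -- p is a max on Ioi 0
  have hmaxIoi : IsMaxOn U (Ioi 0) p := by
    intro q hq
    rcases le_or_gt q M' with hqM | hqM
    · rcases le_or_gt ε' q with hqε | hqε
      · exact hpmax ⟨hqε, hqM⟩
      · have hqε2 : q ≤ ε := le_trans hqε.le (min_le_left _ _)
        have : U q < U 1 := hεsub ⟨hq, hqε2⟩
        exact le_of_lt (lt_of_lt_of_le this hU1le)
    · have hqM2 : M ≤ q := le_trans (le_max_left M 1) hqM.le
      have : U q < U 1 := hM q hqM2
      exact le_of_lt (lt_of_lt_of_le this hU1le)
  have hderiv0 : deriv U p = 0 :=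
    (hmaxIoi.isLocalMax (Ioi_mem_nhds hp0)).deriv_eq_zero
  refine ⟨p, ⟨hp0, hmaxIoi, hderiv0⟩, ?_⟩
  rintro p' ⟨hp'0, hmax', -⟩
  by_contra hne
  have hUeq : U p = U p' := le_antisymm (hmax' (mem_Ioi.2 hp0)) (hmaxIoi (mem_Ioi.2 hp'0))
  have hmid := hconc.2 (mem_Ioi.2 hp'0) (mem_Ioi.2 hp0) hne
    (by norm_num : (0:ℝ) < 1/2) (by norm_num : (0:ℝ) < 1/2) (by norm_num)
  have hmidmem : (1/2 : ℝ) • p' + (1/2 : ℝ) • p ∈ Ioi (0:ℝ) := by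
    simp only [smul_eq_mul, mem_Ioi]
    nlinarith
  have h5 : U ((1/2:ℝ) * p' + (1/2:ℝ) * p) ≤ U p := by
    simpa using hmaxIoi hmidmem
  rw [← hUeq] at hmid
  simp only [smul_eq_mul] at hmid
  linarith
end
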